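/- For every a = (a_1, …, a_d) ∈ (0, ∞)^d, the infimum, over all nonzero u ∈ ℝ^d, of the Lebesgue measure of [0, ∞)^d ∩ {z ∈ ℝ^d : ⟨u, z⟩ ≤ ⟨u, a⟩} equals (d^d / d!) · ∏_{i=1}^d a_i, and this infimum is attained by the half-space {z : ∑_{i=1}^d z_i/a_i ≤ d} (i.e., by u = (1/a_1, …, 1/a_d)). In other words, among all closed half-spaces whose boundary hyperplane passes through a, the one tangent to the pseudo-hyperboloid {z ∈ (0,∞)^d : ∏ z_i = ∏ a_i} at a cuts off the smallest volume from the orthant. -/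

import Mathlib

open MeasureTheory

lemma aux_simplex_vol (n : ℕ) : ∀ (u : Fin n → ℝ), (∀ i, 0 < u i) → ∀ c : ℝ, 0 ≤ c →
    volume {z : Fin n → ℝ | (∀ i, 0 ≤ z i) ∧ ∑ i, u i * z i ≤ c} =
      ENNReal.ofReal (c ^ n / (n.factorial * ∏ i, u i)) := by
  induction n with
  | zero =>
    intro u hu c hc
    have h : {z : Fin 0 → ℝ | (∀ i, 0 ≤ z i) ∧ ∑ i, u i * z i ≤ c} = Set.univ := by
      ext z; simp [hc]
    rw [h]
    simp [MeasureTheory.volume_pi, Measure.pi_univ]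
  | succ n ih =>
    intro u hu c hc
    have hu0 : 0 < u 0 := hu 0
    have hutail : ∀ j : Fin n, 0 < u j.succ := fun j => hu _
    have hKpos : (0:ℝ) < n.factorial * ∏ j, u (Fin.succ j) :=
      mul_pos (by positivity) (Finset.prod_pos fun j _ => hutail j)
    set E : Set (ℝ × (Fin n → ℝ)) :=
      {p | 0 ≤ p.1 ∧ (∀ j, 0 ≤ p.2 j) ∧ u 0 * p.1 + ∑ j, u j.succ * p.2 j ≤ c} with hEdef
    have hEclosed : IsClosed E := by
      have h1 : IsClosed {p : ℝ × (Fin n → ℝ) | 0 ≤ p.1} :=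
        isClosed_le continuous_const continuous_fst
      have h2 : IsClosed {p : ℝ × (Fin n → ℝ) | ∀ j, 0 ≤ p.2 j} := by
        have : {p : ℝ × (Fin n → ℝ) | ∀ j, 0 ≤ p.2 j} = ⋂ j, {p | 0 ≤ p.2 j} := by
          ext p; simp
        rw [this]
        exact isClosed_iInter fun j =>
          isClosed_le continuous_const ((continuous_apply j).comp continuous_snd)
      have h3 : IsClosed {p : ℝ × (Fin n → ℝ) | u 0 * p.1 + ∑ j, u j.succ * p.2 j ≤ c} :=
        isClosed_le ((continuous_const.mul continuous_fst).add
          (continuous_finset_sum _ fun j _ =>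
            continuous_const.mul ((continuous_apply j).comp continuous_snd))) continuous_const
      have : E = {p : ℝ × (Fin n → ℝ) | 0 ≤ p.1} ∩
          ({p | ∀ j, 0 ≤ p.2 j} ∩ {p | u 0 * p.1 + ∑ j, u j.succ * p.2 j ≤ c}) := by
        ext p; simp [hEdef, and_assoc]
      rw [this]; exact h1.inter (h2.inter h3)
    have hEmeas : MeasurableSet E := hEclosed.measurableSet
    have hpre : (MeasurableEquiv.piFinSuccAbove (fun _ : Fin (n+1) => ℝ) 0) ⁻¹' E
        = {z : Fin (n+1) → ℝ | (∀ i, 0 ≤ z i) ∧ ∑ i, u i * z i ≤ c} := by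
      ext z
      simp only [Set.mem_preimage, MeasurableEquiv.piFinSuccAbove_apply,
        Fin.insertNthEquiv_symm_apply, hEdef, Set.mem_setOf_eq, Fin.removeNth,
        Fin.succAbove_zero, Fin.forall_fin_succ, Fin.sum_univ_succ, and_assoc]
    have hmp := (measurePreserving_piFinSuccAbove (fun _ : Fin (n+1) => (volume : Measure ℝ)) 0)
    have hvol : volume {z : Fin (n+1) → ℝ | (∀ i, 0 ≤ z i) ∧ ∑ i, u i * z i ≤ c}
        = ((volume : Measure ℝ).prod (volume : Measure (Fin n → ℝ))) E := by
      rw [← hpre]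
      have h2 : (volume : Measure (Fin n → ℝ)) = Measure.pi fun _ => volume :=
        MeasureTheory.volume_pi
      rw [MeasureTheory.volume_pi, h2, ← hmp.map_eq,
        Measure.map_apply (MeasurableEquiv.piFinSuccAbove _ 0).measurable hEmeas]
    rw [hvol, Measure.prod_apply hEmeas]
    have hsec : ∀ x : ℝ, (volume : Measure (Fin n → ℝ)) (Prod.mk x ⁻¹' E)
        = Set.indicator (Set.Icc 0 (c / u 0))
            (fun x => ENNReal.ofReal ((c - u 0 * x) ^ n / (n.factorial * ∏ j, u (Fin.succ j)))) x := by
      intro x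
      by_cases hx : x ∈ Set.Icc 0 (c / u 0)
      · rw [Set.indicator_of_mem hx]
        obtain ⟨hx0, hx1⟩ := hx
        have hcx : 0 ≤ c - u 0 * x := by
          have := (le_div_iff₀ hu0).mp hx1
          linarith
        have hsect : Prod.mk x ⁻¹' E
            = {y : Fin n → ℝ | (∀ j, 0 ≤ y j) ∧ ∑ j, u j.succ * y j ≤ c - u 0 * x} := by
          ext y
          simp only [Set.mem_preimage, hEdef, Set.mem_setOf_eq, hx0, true_and]
          constructor
          · rintro ⟨h1, h2⟩; exact ⟨h1, by linarith⟩
          · rintro ⟨h1, h2⟩; exact ⟨h1, by linarith⟩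
        rw [hsect, ih (fun j => u j.succ) hutail _ hcx]
      · rw [Set.indicator_of_notMem hx]
        have hsect : Prod.mk x ⁻¹' E = ∅ := by
          ext y
          simp only [Set.mem_preimage, hEdef, Set.mem_setOf_eq, Set.mem_empty_iff_false,
            iff_false, not_and]
          intro hx0 hy
          rcases lt_or_ge (c / u 0) x with h | h
          · have : c < u 0 * x := by
              have := (div_lt_iff₀ hu0).mp h
              linarith
            have hsum : 0 ≤ ∑ j, u j.succ * y j :=
              Finset.sum_nonneg fun j _ => mul_nonneg (hutail j).le (hy j)
            linarith
          · exact absurd ⟨hx0, h⟩ hx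
        rw [hsect]; simp
    simp_rw [hsec]
    rw [lintegral_indicator measurableSet_Icc]
    have h0c : (0:ℝ) ≤ c / u 0 := div_nonneg hc hu0.le
    set K : ℝ := n.factorial * ∏ j, u (Fin.succ j) with hK
    have hcont : Continuous fun x : ℝ => (c - u 0 * x) ^ n / K :=
      ((continuous_const.sub (continuous_const.mul continuous_id)).pow n).div_const K
    have hint : IntegrableOn (fun x : ℝ => (c - u 0 * x) ^ n / K) (Set.Icc 0 (c / u 0)) :=
      hcont.integrableOn_Icc
    have hnn : 0 ≤ᵐ[volume.restrict (Set.Icc 0 (c / u 0))]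
        fun x : ℝ => (c - u 0 * x) ^ n / K := by
      filter_upwards [ae_restrict_mem measurableSet_Icc] with x hx
      have hcx : 0 ≤ c - u 0 * x := by
        have := (le_div_iff₀ hu0).mp hx.2
        linarith
      positivity
    rw [← MeasureTheory.ofReal_integral_eq_lintegral_ofReal hint hnn]
    congr 1
    rw [MeasureTheory.integral_Icc_eq_integral_Ioc,
      ← intervalIntegral.integral_of_le h0c]
    have hcomp : (fun x : ℝ => (c - u 0 * x) ^ n / K)
        = fun x : ℝ => ((fun t : ℝ => (c - t) ^ n / K) (u 0 * x)) := by
      funext x; rfl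
    rw [hcomp, intervalIntegral.integral_comp_mul_left (fun t : ℝ => (c - t) ^ n / K) hu0.ne']
    rw [mul_zero, mul_div_cancel₀ _ hu0.ne']
    rw [intervalIntegral.integral_comp_sub_left (fun t : ℝ => t ^ n / K) c]
    rw [sub_self, sub_zero]
    rw [intervalIntegral.integral_div, integral_pow]
    have hprodsucc : ∏ i : Fin (n+1), u i = u 0 * ∏ j, u (Fin.succ j) := Fin.prod_univ_succ u
    rw [hprodsucc, hK, Nat.factorial_succ, smul_eq_mul, zero_pow (Nat.succ_ne_zero n), sub_zero]
    have hu0' : u 0 ≠ 0 := hu0.ne'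
    have hne1 : ((n:ℝ) + 1) ≠ 0 := by positivity
    have hfac : (n.factorial:ℝ) ≠ 0 := by positivity
    have hprodne : (∏ j, u (Fin.succ j)) ≠ 0 := (Finset.prod_pos fun j _ => hutail j).ne'
    push_cast
    field_simp

lemma aux_amgm (d : ℕ) (hd : 1 ≤ d) (x : Fin d → ℝ) (hx : ∀ i, 0 < x i) :
    (d:ℝ)^d * ∏ i, x i ≤ (∑ i, x i)^d := by
  have hd0 : (0:ℝ) < d := by exact_mod_cast hd
  have hprod : 0 < ∏ i, x i := Finset.prod_pos fun i _ => hx i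
  have hsum : 0 < ∑ i, x i := Finset.sum_pos (fun i _ => hx i) ⟨⟨0, hd⟩, Finset.mem_univ _⟩
  have h1 : ∏ i, (x i) ^ ((d:ℝ)⁻¹) ≤ ∑ i : Fin d, (d:ℝ)⁻¹ * x i :=
    Real.geom_mean_le_arith_mean_weighted Finset.univ (fun _ => (d:ℝ)⁻¹) x
      (fun _ _ => by positivity)
      (by simp [Finset.sum_const, Finset.card_univ]
          field_simp)
      (fun i _ => (hx i).le)
  have h2 : (∏ i, x i) ^ ((d:ℝ)⁻¹) ≤ (∑ i, x i) / d := by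
    rw [← Real.finset_prod_rpow _ _ (fun i _ => (hx i).le)]
    calc ∏ i, (x i) ^ ((d:ℝ)⁻¹) ≤ ∑ i : Fin d, (d:ℝ)⁻¹ * x i := h1
      _ = (∑ i, x i) / d := by rw [← Finset.mul_sum]; ring
  have h3 : ((∏ i, x i) ^ ((d:ℝ)⁻¹))^d ≤ ((∑ i, x i)/d)^d :=
    pow_le_pow_left₀ (by positivity) h2 d
  have h4 : ((∏ i, x i) ^ ((d:ℝ)⁻¹))^d = ∏ i, x i := by
    rw [← Real.rpow_natCast ((∏ i, x i) ^ ((d:ℝ)⁻¹)) d, ← Real.rpow_mul hprod.le,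
      inv_mul_cancel₀ hd0.ne', Real.rpow_one]
  rw [h4, div_pow] at h3
  rw [mul_comm]
  exact (le_div_iff₀ (by positivity)).mp h3

/-- Among all closed half-spaces whose boundary hyperplane passes through
`a ∈ (0,∞)^d`, the minimum volume cut off from the orthant `[0,∞)^d` equals
`(d^d / d!) ∏ i, a i`, and the minimum is attained by the half-space
`{z : ∑ i, z i / a i ≤ d}`, i.e. by `u = (1/a₁, …, 1/a_d)`. -/
theorem statement4 (d : ℕ) (hd : 1 ≤ d) (a : Fin d → ℝ) (ha : ∀ i, 0 < a i) :
    (⨅ (u : Fin d → ℝ) (_ : u ≠ 0),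
        MeasureTheory.volume
          {z : Fin d → ℝ | (∀ i, 0 ≤ z i) ∧ ∑ i, u i * z i ≤ ∑ i, u i * a i}) =
      ENNReal.ofReal (((d : ℝ) ^ d / d.factorial) * ∏ i, a i) ∧
    MeasureTheory.volume
        {z : Fin d → ℝ | (∀ i, 0 ≤ z i) ∧ ∑ i, (1 / a i) * z i ≤ ∑ i, (1 / a i) * a i} =
      ENNReal.ofReal (((d : ℝ) ^ d / d.factorial) * ∏ i, a i) := by
  have hd0 : (0:ℝ) < d := by exact_mod_cast hd
  have haprod : 0 < ∏ i, a i := Finset.prod_pos fun i _ => ha i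
  have hsum1 : ∑ i : Fin d, (1 / a i) * a i = (d:ℝ) := by
    have h1 : ∀ i : Fin d, (1 / a i) * a i = 1 := fun i => by
      rw [one_div, inv_mul_cancel₀ (ha i).ne']
    rw [Finset.sum_congr rfl fun i _ => h1 i]
    simp [Finset.card_univ]
  have hupos : ∀ i : Fin d, 0 < 1 / a i := fun i => one_div_pos.mpr (ha i)
  have part2 : volume {z : Fin d → ℝ | (∀ i, 0 ≤ z i) ∧ ∑ i, (1/a i) * z i ≤ ∑ i, (1/a i)*a i}
      = ENNReal.ofReal (((d:ℝ)^d / d.factorial) * ∏ i, a i) := by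
    have hcd : (0:ℝ) ≤ ∑ i : Fin d, (1 / a i) * a i := by rw [hsum1]; exact hd0.le
    rw [aux_simplex_vol d (fun i => 1 / a i) hupos _ hcd]
    congr 1
    rw [hsum1]
    have hp : ∏ i, (1 / a i) = (∏ i, a i)⁻¹ := by
      simp [one_div]
    rw [hp]
    have hfac : (0:ℝ) < d.factorial := by positivity
    field_simp
  refine ⟨le_antisymm ?_ ?_, part2⟩
  · have hune : (fun i : Fin d => 1 / a i) ≠ 0 := by
      intro h
      have h0 := congrFun h ⟨0, hd⟩
      simp only [Pi.zero_apply, one_div] at h0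
      exact (inv_ne_zero (ha _).ne') h0
    exact iInf₂_le_of_le (fun i => 1 / a i) hune part2.le
  · refine le_iInf fun u => le_iInf fun hu => ?_
    by_cases hpos : ∀ i, 0 < u i
    · rw [aux_simplex_vol d u hpos _ (Finset.sum_nonneg fun i _ => (mul_pos (hpos i) (ha i)).le)]
      apply ENNReal.ofReal_le_ofReal
      have hx := aux_amgm d hd (fun i => u i * a i) (fun i => mul_pos (hpos i) (ha i))
      have hprodm : ∏ i, (u i * a i) = (∏ i, u i) * ∏ i, a i := Finset.prod_mul_distrib
      simp only [hprodm] at hx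
      have hup : 0 < ∏ i, u i := Finset.prod_pos fun i _ => hpos i
      have hfac : (0:ℝ) < d.factorial := by positivity
      rw [div_mul_eq_mul_div, div_le_div_iff₀ (by positivity) (by positivity)]
      calc (d:ℝ)^d * (∏ i, a i) * ((d.factorial:ℝ) * ∏ i, u i)
          = ((d:ℝ)^d * ((∏ i, u i) * ∏ i, a i)) * d.factorial := by ring
        _ ≤ (∑ i, u i * a i)^d * d.factorial :=
            mul_le_mul_of_nonneg_right hx hfac.le
    · have htop : volume {z : Fin d → ℝ | (∀ i, 0 ≤ z i) ∧ ∑ i, u i * z i ≤ ∑ i, u i * a i} = ⊤ := by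
        rw [eq_top_iff]
        by_cases hneg : ∃ i, u i < 0
        · obtain ⟨i, hi⟩ := hneg
          set M : ℝ := ∑ j, |u j| with hM
          have hM0 : 0 ≤ M := Finset.sum_nonneg fun j _ => abs_nonneg _
          set T : ℝ := max 0 (a i + M / (-u i)) with hT
          set B : Set (Fin d → ℝ) :=
            Set.pi Set.univ (fun j => if j = i then Set.Ici T else Set.Icc (a j) (a j + 1)) with hB
          have hBsub : B ⊆ {z | (∀ i, 0 ≤ z i) ∧ ∑ i, u i * z i ≤ ∑ i, u i * a i} := by
            intro z hz
            rw [hB, Set.mem_univ_pi] at hz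
            have hzj : ∀ j, j ≠ i → a j ≤ z j ∧ z j ≤ a j + 1 := by
              intro j hj
              have h := hz j
              rw [if_neg hj] at h
              exact h
            have hzi : T ≤ z i := by
              have h := hz i; rw [if_pos rfl] at h; exact h
            constructor
            · intro j
              by_cases hj : j = i
              · subst hj; exact le_trans (le_max_left _ _) hzi
              · exact le_trans (ha j).le (hzj j hj).1
            · have hterm : ∀ j ∈ Finset.univ.erase i, u j * z j ≤ u j * a j + |u j| := by
                intro j hj
                have hj' : j ≠ i := (Finset.mem_erase.mp hj).1
                obtain ⟨h1, h2⟩ := hzj j hj'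
                have hkey : u j * z j - u j * a j ≤ |u j| := by
                  calc u j * z j - u j * a j = u j * (z j - a j) := by ring
                    _ ≤ |u j * (z j - a j)| := le_abs_self _
                    _ = |u j| * |z j - a j| := abs_mul _ _
                    _ ≤ |u j| * 1 := by
                        apply mul_le_mul_of_nonneg_left _ (abs_nonneg _)
                        rw [abs_le]; constructor <;> linarith
                    _ = |u j| := mul_one _
                linarith
              have hsum_erase : ∑ j ∈ Finset.univ.erase i, u j * z j
                  ≤ ∑ j ∈ Finset.univ.erase i, u j * a j + M := by
                calc ∑ j ∈ Finset.univ.erase i, u j * z j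
                    ≤ ∑ j ∈ Finset.univ.erase i, (u j * a j + |u j|) := Finset.sum_le_sum hterm
                  _ = ∑ j ∈ Finset.univ.erase i, u j * a j
                      + ∑ j ∈ Finset.univ.erase i, |u j| := Finset.sum_add_distrib
                  _ ≤ _ := by
                      have hle : ∑ j ∈ Finset.univ.erase i, |u j| ≤ M := by
                        apply Finset.sum_le_sum_of_subset_of_nonneg (Finset.erase_subset _ _)
                        intro j _ _; exact abs_nonneg _
                      linarith
              have hi' : u i ≠ 0 := hi.ne
              have hiz : u i * z i ≤ u i * a i - M := by
                have h1 : a i + M / (-u i) ≤ z i := le_trans (le_max_right _ _) hzi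
                have h2 : u i * z i ≤ u i * (a i + M / (-u i)) :=
                  mul_le_mul_of_nonpos_left h1 hi.le
                have hMi : u i * (M / u i) = M := by
                  rw [← mul_div_assoc, mul_div_cancel_left₀ _ hi.ne]
                have h3 : u i * (a i + M / (-u i)) = u i * a i - M := by
                  rw [mul_add, div_neg, mul_neg, hMi]; ring
                linarith
              have hs1 : ∑ j, u j * z j = u i * z i + ∑ j ∈ Finset.univ.erase i, u j * z j :=
                (Finset.add_sum_erase _ (fun j => u j * z j) (Finset.mem_univ i)).symm
              have hs2 : ∑ j, u j * a j = u i * a i + ∑ j ∈ Finset.univ.erase i, u j * a j :=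
                (Finset.add_sum_erase _ (fun j => u j * a j) (Finset.mem_univ i)).symm
              rw [hs1, hs2]
              linarith
          have hvolB : volume B = ⊤ := by
            rw [hB, volume_pi_pi]
            rw [← Finset.mul_prod_erase _ _ (Finset.mem_univ i), if_pos rfl, Real.volume_Ici]
            rw [ENNReal.top_mul]
            apply Finset.prod_ne_zero_iff.mpr
            intro j hj
            rw [if_neg (Finset.mem_erase.mp hj).1, Real.volume_Icc]
            have h1 : a j + 1 - a j = 1 := by ring
            rw [h1]
            simp
          calc (⊤ : ENNReal) = volume B := hvolB.symm
            _ ≤ _ := measure_mono hBsub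
        · push_neg at hneg
          push_neg at hpos
          obtain ⟨i, hi⟩ := hpos
          have hui : u i = 0 := le_antisymm hi (hneg i)
          set B : Set (Fin d → ℝ) :=
            Set.pi Set.univ (fun j => if u j = 0 then Set.Ici (0:ℝ) else Set.Icc 0 (a j)) with hB
          have hBsub : B ⊆ {z | (∀ i, 0 ≤ z i) ∧ ∑ i, u i * z i ≤ ∑ i, u i * a i} := by
            intro z hz
            rw [hB, Set.mem_univ_pi] at hz
            constructor
            · intro j
              by_cases h : u j = 0
              · have := hz j; rw [if_pos h] at this; exact this
              · have := hz j; rw [if_neg h] at this; exact this.1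
            · apply Finset.sum_le_sum
              intro j _
              by_cases h : u j = 0
              · simp [h]
              · have hmem := hz j; rw [if_neg h] at hmem
                have hup : 0 < u j := lt_of_le_of_ne (hneg j) (Ne.symm h)
                exact mul_le_mul_of_nonneg_left hmem.2 hup.le
          have hvolB : volume B = ⊤ := by
            rw [hB, volume_pi_pi]
            rw [← Finset.mul_prod_erase _ _ (Finset.mem_univ i), if_pos hui, Real.volume_Ici]
            rw [ENNReal.top_mul]
            apply Finset.prod_ne_zero_iff.mpr
            intro j hj
            by_cases h : u j = 0
            · rw [if_pos h, Real.volume_Ici]; exact ENNReal.top_ne_zero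
            · rw [if_neg h, Real.volume_Icc, sub_zero]
              exact (ENNReal.ofReal_pos.mpr (ha j)).ne'
          calc (⊤ : ENNReal) = volume B := hvolB.symm
            _ ≤ _ := measure_mono hBsub
      rw [htop]
      exact le_top
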